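/- Every robust protocol over an erasure channel has a noise-independent order of speaking: for every deterministic robust interactive protocol of length N over an erasure channel with finite alphabet Σ, and every input pair (x,y), there exists a function g : {1,…,N} → {Alice, Bob} such that for every erasure pattern E ⊆ {1,…,N}, the sender of round i in the execution on inputs (x,y) with erasure pattern E is g(i). -/
import Mathlib


/-- A deterministic interactive protocol of length `N` over an erasure channel with
alphabet `Γ`, where the party to send at each round is decided by each party as a
function of its own view. A view item is `some s` for a symbol the party sent or
received intact, and `none` for an erased reception. There is no feedback: the sender
does not learn whether its transmission was erased. -/
structure AdaptiveErasureProtocol (Γ X Y : Type) (N : ℕ) where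
  decideA : X → List (Option Γ) → Bool
  decideB : Y → List (Option Γ) → Bool
  nextA : X → List (Option Γ) → Γ
  nextB : Y → List (Option Γ) → Γ

/-- The pair (Alice's view, Bob's view) after the first `i` rounds of the execution on
inputs `x, y` with erasure pattern `E` (by convention Alice sends iff her decision
function says so; for robust protocols Bob's decision agrees). The sender appends its
sent symbol to its view; the receiver appends `none` if the round is erased and the
sent symbol otherwise. -/
def AdaptiveErasureProtocol.views {Γ X Y : Type} {N : ℕ}
    (P : AdaptiveErasureProtocol Γ X Y N) (x : X) (y : Y) (E : Finset (Fin N)) :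
    ℕ → List (Option Γ) × List (Option Γ)
  | 0 => ([], [])
  | i+1 =>
    let v := P.views x y E i
    if h : i < N then
      if P.decideA x v.1 then
        let s := P.nextA x v.1
        (v.1 ++ [some s], v.2 ++ [if (⟨i, h⟩ : Fin N) ∈ E then none else some s])
      else
        let s := P.nextB y v.2
        (v.1 ++ [if (⟨i, h⟩ : Fin N) ∈ E then none else some s], v.2 ++ [some s])
    else v


section Aux
variable {Γ X Y : Type} {N : ℕ} (P : AdaptiveErasureProtocol Γ X Y N) (x : X) (y : Y)

lemma views_congr (E E' : Finset (Fin N)) (i : ℕ)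
    (h : ∀ j (hj : j < N), j < i → ((⟨j, hj⟩ : Fin N) ∈ E ↔ ⟨j, hj⟩ ∈ E')) :
    P.views x y E i = P.views x y E' i := by
  induction i with
  | zero => rfl
  | succ i ih =>
    have hv : P.views x y E i = P.views x y E' i :=
      ih (fun j hj hji => h j hj (by omega))
    simp only [AdaptiveErasureProtocol.views, hv]
    by_cases hN : i < N
    · have hm : ((⟨i, hN⟩ : Fin N) ∈ E) = ((⟨i, hN⟩ : Fin N) ∈ E') :=
        propext (h i hN (by omega))
      simp only [dif_pos hN, hm]
    · simp only [dif_neg hN]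

lemma fst_eq (E E' : Finset (Fin N)) (k i : ℕ) (hk : k ≤ i)
    (hv : (P.views x y E k).1 = (P.views x y E' k).1)
    (hmem : ∀ m (hm : m < N), k ≤ m → m < i →
      ((⟨m, hm⟩ : Fin N) ∈ E ∧ (⟨m, hm⟩ : Fin N) ∈ E')) :
    (P.views x y E i).1 = (P.views x y E' i).1 := by
  induction i, hk using Nat.le_induction with
  | base => exact hv
  | succ n hkn ih =>
    have h1 : (P.views x y E n).1 = (P.views x y E' n).1 :=
      ih (fun m hm hm1 hm2 => hmem m hm hm1 (by omega))
    simp only [AdaptiveErasureProtocol.views]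
    by_cases hN : n < N
    · simp only [dif_pos hN, h1]
      obtain ⟨hE, hE'⟩ := hmem n hN hkn (by omega)
      by_cases hd : P.decideA x (P.views x y E' n).1
      · simp only [if_pos hd]
      · simp only [if_neg hd, if_pos hE, if_pos hE']
    · simp only [dif_neg hN]; exact h1

lemma snd_eq (hrobust : ∀ (E : Finset (Fin N)) (i : ℕ), i < N →
      P.decideA x (P.views x y E i).1 = !P.decideB y (P.views x y E i).2)
    (E E' : Finset (Fin N)) (k i : ℕ) (hk : k ≤ i)
    (hv : (P.views x y E k).2 = (P.views x y E' k).2)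
    (hmem : ∀ m (hm : m < N), k ≤ m → m < i →
      ((⟨m, hm⟩ : Fin N) ∈ E ∧ (⟨m, hm⟩ : Fin N) ∈ E')) :
    (P.views x y E i).2 = (P.views x y E' i).2 := by
  induction i, hk using Nat.le_induction with
  | base => exact hv
  | succ n hkn ih =>
    have h2 : (P.views x y E n).2 = (P.views x y E' n).2 :=
      ih (fun m hm hm1 hm2 => hmem m hm hm1 (by omega))
    simp only [AdaptiveErasureProtocol.views]
    by_cases hN : n < N
    · have hdec : P.decideA x (P.views x y E n).1 = P.decideA x (P.views x y E' n).1 := by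
        rw [hrobust E n hN, hrobust E' n hN, h2]
      simp only [dif_pos hN]
      obtain ⟨hE, hE'⟩ := hmem n hN hkn (by omega)
      by_cases hd : P.decideA x (P.views x y E n).1
      · rw [hd] at hdec
        simp only [if_pos hd, if_pos hdec.symm, if_pos hE, if_pos hE', h2]
      · rw [Bool.not_eq_true] at hd
        rw [hd] at hdec
        simp only [hd, hdec.symm, Bool.false_eq_true, if_false, h2]
    · simp only [dif_neg hN]; exact h2

/-- Hybrid chain: erasing all rounds in `[k, i)` on top of `E` does not change the
decision at round `i`. -/
lemma chain (hrobust : ∀ (E : Finset (Fin N)) (i : ℕ), i < N →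
      P.decideA x (P.views x y E i).1 = !P.decideB y (P.views x y E i).2)
    (E : Finset (Fin N)) (i : ℕ) (hi : i < N) :
    ∀ d k, k + d = i →
      P.decideA x (P.views x y
        (E ∪ Finset.univ.filter fun j : Fin N => k ≤ j.val ∧ j.val < i) i).1
      = P.decideA x (P.views x y E i).1 := by
  intro d
  induction d with
  | zero =>
    intro k hk
    have hv : P.views x y
        (E ∪ Finset.univ.filter fun j : Fin N => k ≤ j.val ∧ j.val < i) i
        = P.views x y E i := by
      apply views_congr
      intro j hj hji
      simp only [Finset.mem_union, Finset.mem_filter, Finset.mem_univ, true_and]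
      have : ¬(k ≤ j ∧ j < i) := by omega
      tauto
    rw [hv]
  | succ d ih =>
    intro k hk
    have hki : k < i := by omega
    have hkN : k < N := by omega
    set Hk : Finset (Fin N) :=
      E ∪ Finset.univ.filter fun j : Fin N => k ≤ j.val ∧ j.val < i with hHk
    set Hk1 : Finset (Fin N) :=
      E ∪ Finset.univ.filter fun j : Fin N => k + 1 ≤ j.val ∧ j.val < i with hHk1
    have hstep : P.decideA x (P.views x y Hk i).1 = P.decideA x (P.views x y Hk1 i).1 := by
      have hvk : P.views x y Hk k = P.views x y Hk1 k := by
        apply views_congr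
        intro j hj hjk
        simp only [hHk, hHk1, Finset.mem_union, Finset.mem_filter, Finset.mem_univ, true_and]
        have h1 : ¬(k ≤ j ∧ j < i) := by omega
        have h2 : ¬(k + 1 ≤ j ∧ j < i) := by omega
        tauto
      have hmem : ∀ m (hm : m < N), k + 1 ≤ m → m < i →
          ((⟨m, hm⟩ : Fin N) ∈ Hk ∧ (⟨m, hm⟩ : Fin N) ∈ Hk1) := by
        intro m hm hm1 hm2
        constructor <;>
        · simp only [hHk, hHk1, Finset.mem_union, Finset.mem_filter, Finset.mem_univ, true_and]
          right; omega
      by_cases hd : P.decideA x (P.views x y Hk k).1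
      · -- Alice sends at round k; her views stay equal up to i
        have hd1 : P.decideA x (P.views x y Hk1 k).1 = true := by rw [← hvk]; exact hd
        have h1 : (P.views x y Hk (k+1)).1 = (P.views x y Hk1 (k+1)).1 := by
          simp only [AdaptiveErasureProtocol.views, dif_pos hkN, hvk, if_pos hd1]
        have hfi : (P.views x y Hk i).1 = (P.views x y Hk1 i).1 :=
          fst_eq P x y Hk Hk1 (k+1) i (by omega) h1 hmem
        rw [hfi]
      · -- Bob sends at round k; his views stay equal up to i
        have hd1 : ¬ P.decideA x (P.views x y Hk1 k).1 = true := by rw [← hvk]; exact hd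
        have h2 : (P.views x y Hk (k+1)).2 = (P.views x y Hk1 (k+1)).2 := by
          simp only [AdaptiveErasureProtocol.views, dif_pos hkN, hvk, if_neg hd1]
        have hsi : (P.views x y Hk i).2 = (P.views x y Hk1 i).2 :=
          snd_eq P x y hrobust Hk Hk1 (k+1) i (by omega) h2 hmem
        rw [hrobust Hk i hi, hrobust Hk1 i hi, hsi]
    rw [hstep]
    exact ih (k+1) (by omega)

end Aux

/-- Every robust protocol over an erasure channel has a noise-independent
order of speaking: if for every input pair and every erasure pattern the two parties'
decisions of who sends agree at every round (robustness), then for every input pair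
(x,y) there is a function g on rounds such that for every erasure pattern, the sender
of round i in the execution on (x,y) is g(i). -/
theorem robust_erasure_protocol_has_fixed_order
    (Γ X Y : Type) [Fintype Γ] (N : ℕ) (P : AdaptiveErasureProtocol Γ X Y N)
    (hrobust : ∀ (x : X) (y : Y) (E : Finset (Fin N)) (i : ℕ), i < N →
      P.decideA x (P.views x y E i).1 = !P.decideB y (P.views x y E i).2) :
    ∀ (x : X) (y : Y), ∃ g : Fin N → Bool,
      ∀ (E : Finset (Fin N)) (i : Fin N),
        P.decideA x (P.views x y E i.val).1 = g i := by
  intro x y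
  refine ⟨fun i => P.decideA x (P.views x y Finset.univ i.val).1, ?_⟩
  intro E i
  obtain ⟨i, hi⟩ := i
  simp only
  have h1 := chain P x y (hrobust x y) E i hi i 0 (by omega)
  have h2 : P.views x y
      (E ∪ Finset.univ.filter fun j : Fin N => 0 ≤ j.val ∧ j.val < i) i
      = P.views x y Finset.univ i := by
    apply views_congr
    intro j hj hji
    simp only [Finset.mem_union, Finset.mem_filter, Finset.mem_univ, true_and, iff_true]
    right; omega
  rw [← h1, h2]
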